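/- Let G be a finite simple graph and let Δ* ≥ 0 and s ≥ 1 be integers. Construct an ASHG (G',w') as follows: every edge of G receives weight −1; add two new vertices x, x'; add s(Δ*+1) − 1 new vertices, each joined to both x and x' by edges of weight 1; for each u ∈ V(G) add Δ*+1 new vertices u_1,...,u_{Δ*+1}, each joined to x and to u by edges of weight 1; and attach to each u_i a new leaf u_i' joined to u_i by an edge of weight 1. Let 𝒫 be the partition consisting of: the part containing x, x' and their s(Δ*+1)−1 common neighbours; the pairs {u_i, u_i'} for all u ∈ V(G) and i ∈ {1,...,Δ*+1}; and singletons for all vertices of G. Then 𝒫 admits a blocking coalition if and only if G contains a set S of at least s vertices such that the induced subgraph G[S] has maximum degree at most Δ*. -/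

import Mathlib

open Finset

noncomputable section
open scoped Classical

variable {V : Type*}

/-- The utility of agent `u` in the coalition `X`: the sum of the weights of the
edges joining `u` to members of `X`. -/
def ut (G : SimpleGraph V) (w : V → V → ℚ) (X : Finset V) (u : V) : ℚ :=
  ∑ v ∈ X.filter (fun v => G.Adj u v), w u v

/-- `P` encodes a partition of the vertex set: `P u` is the part containing `u`. -/
def IsPartitionFun (P : V → Finset V) : Prop :=
  (∀ u, u ∈ P u) ∧ ∀ u v, v ∈ P u → P v = P u

/-- `X` is a blocking coalition for the partition `P`. -/
def Blocking (G : SimpleGraph V) (w : V → V → ℚ) (P : V → Finset V)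
    (X : Finset V) : Prop :=
  X.Nonempty ∧ ∀ u ∈ X, ut G w (P u) u < ut G w X u

/-- The partition `P` is core stable: it admits no blocking coalition. -/
def CoreStable (G : SimpleGraph V) (w : V → V → ℚ) (P : V → Finset V) : Prop :=
  ∀ X : Finset V, ¬ Blocking G w P X

/-- The partition `P` is `k`-core stable: it admits no blocking coalition of size at most `k`. -/
def KCoreStable (k : ℕ) (G : SimpleGraph V) (w : V → V → ℚ) (P : V → Finset V) : Prop :=
  ∀ X : Finset V, X.card ≤ k → ¬ Blocking G w P X

/-- The vertices of the Bounded Degree Deletion gadget: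
`orig a` are the vertices of `G`, `x`, `x'`, the common neighbours `c j`,
the vertices `u a i` and the leaves `u' a i`. -/
inductive BDVtx (V : Type*) (D s : ℕ) : Type _
  | orig : V → BDVtx V D s
  | x : BDVtx V D s
  | x' : BDVtx V D s
  | c : Fin (s * (D + 1) - 1) → BDVtx V D s
  | u : V → Fin (D + 1) → BDVtx V D s
  | u' : V → Fin (D + 1) → BDVtx V D s
  deriving DecidableEq, Fintype

/-- The weight function of the Bounded Degree Deletion gadget (`0` on non-edges). -/
def w11 {V : Type*} (G : SimpleGraph V) (D s : ℕ) :
    BDVtx V D s → BDVtx V D s → ℚ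
  | BDVtx.orig a, BDVtx.orig b => if G.Adj a b then -1 else 0
  | BDVtx.c _, BDVtx.x => 1
  | BDVtx.x, BDVtx.c _ => 1
  | BDVtx.c _, BDVtx.x' => 1
  | BDVtx.x', BDVtx.c _ => 1
  | BDVtx.u _ _, BDVtx.x => 1
  | BDVtx.x, BDVtx.u _ _ => 1
  | BDVtx.u b _, BDVtx.orig a => if a = b then 1 else 0
  | BDVtx.orig a, BDVtx.u b _ => if a = b then 1 else 0
  | BDVtx.u' b i, BDVtx.u b' i' => if b = b' ∧ i = i' then 1 else 0
  | BDVtx.u b i, BDVtx.u' b' i' => if b = b' ∧ i = i' then 1 else 0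
  | _, _ => 0

/-- The initial partition: `x`, `x'` and their common neighbours together; each
`u a i` with its leaf `u' a i`; all vertices of `G` as singletons. -/
def P11 {V : Type*} [Fintype V] (D s : ℕ) : BDVtx V D s → Finset (BDVtx V D s)
  | BDVtx.orig a => {BDVtx.orig a}
  | BDVtx.x => insert BDVtx.x (insert BDVtx.x' (univ.image BDVtx.c))
  | BDVtx.x' => insert BDVtx.x (insert BDVtx.x' (univ.image BDVtx.c))
  | BDVtx.c _ => insert BDVtx.x (insert BDVtx.x' (univ.image BDVtx.c))
  | BDVtx.u a i => {BDVtx.u a i, BDVtx.u' a i}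
  | BDVtx.u' a i => {BDVtx.u a i, BDVtx.u' a i}


set_option linter.unusedSectionVars false

section Proof
variable {V : Type*} [Fintype V] (G : SimpleGraph V) (D s : ℕ)

lemma w11_self (a : BDVtx V D s) : w11 G D s a a = 0 := by
  cases a <;> simp [w11]

lemma ut_eq (X : Finset (BDVtx V D s)) (a : BDVtx V D s) :
    ut (SimpleGraph.fromRel fun u v => w11 G D s u v ≠ 0) (w11 G D s) X a
      = ∑ v ∈ X, w11 G D s a v := by
  rw [ut, Finset.sum_filter]
  refine Finset.sum_congr rfl fun v hv => ?_
  by_cases h : (SimpleGraph.fromRel fun u v => w11 G D s u v ≠ 0).Adj a v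
  · rw [if_pos h]
  · rw [if_neg h]
    rw [SimpleGraph.fromRel_adj] at h
    by_cases hav : a = v
    · subst hav; exact (w11_self G D s a).symm
    · push_neg at h
      exact ((h hav).1).symm

lemma w_x' (v : BDVtx V D s) :
    w11 G D s BDVtx.x' v = if (∃ j, v = BDVtx.c j) then 1 else 0 := by
  cases v <;> simp [w11]

lemma w_x (v : BDVtx V D s) :
    w11 G D s BDVtx.x v = (if (∃ j, v = BDVtx.c j) then (1:ℚ) else 0)
      + (if (∃ a i, v = BDVtx.u a i) then 1 else 0) := by
  cases v <;> simp [w11]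

lemma w_c (j) (v : BDVtx V D s) :
    w11 G D s (BDVtx.c j) v = (if v = BDVtx.x then (1:ℚ) else 0)
      + (if v = BDVtx.x' then 1 else 0) := by
  cases v <;> simp [w11]

lemma w_u' (a i) (v : BDVtx V D s) :
    w11 G D s (BDVtx.u' a i) v = if v = BDVtx.u a i then (1:ℚ) else 0 := by
  cases v <;> simp [w11, eq_comm]

lemma w_u (a i) (v : BDVtx V D s) :
    w11 G D s (BDVtx.u a i) v = (if v = BDVtx.x then (1:ℚ) else 0)
      + (if v = BDVtx.orig a then 1 else 0) + (if v = BDVtx.u' a i then 1 else 0) := by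
  cases v <;> simp [w11, eq_comm]

lemma w_orig (a) (v : BDVtx V D s) :
    w11 G D s (BDVtx.orig a) v = (if (∃ i, v = BDVtx.u a i) then (1:ℚ) else 0)
      + (if (∃ b, v = BDVtx.orig b ∧ G.Adj a b) then -1 else 0) := by
  cases v <;> simp [w11, eq_comm]

lemma sum_P_x' :
    ∑ v ∈ P11 D s (BDVtx.x' : BDVtx V D s), w11 G D s BDVtx.x' v
      = ((s * (D + 1) - 1 : ℕ) : ℚ) := by
  show ∑ v ∈ insert BDVtx.x (insert BDVtx.x' (univ.image BDVtx.c)), _ = _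
  rw [Finset.sum_insert (by simp), Finset.sum_insert (by simp),
    Finset.sum_image (by intro a _ b _ h; simpa using h)]
  simp [w11, Finset.card_univ]

lemma sum_P_x :
    ∑ v ∈ P11 D s (BDVtx.x : BDVtx V D s), w11 G D s BDVtx.x v
      = ((s * (D + 1) - 1 : ℕ) : ℚ) := by
  show ∑ v ∈ insert BDVtx.x (insert BDVtx.x' (univ.image BDVtx.c)), _ = _
  rw [Finset.sum_insert (by simp), Finset.sum_insert (by simp),
    Finset.sum_image (by intro a _ b _ h; simpa using h)]
  simp [w11, Finset.card_univ]

lemma sum_X_x' (X : Finset (BDVtx V D s)) :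
    ∑ v ∈ X, w11 G D s BDVtx.x' v
      = ((X.filter (fun v => ∃ j, v = BDVtx.c j)).card : ℚ) := by
  simp only [w_x']; rw [Finset.sum_boole]

lemma sum_X_x (X : Finset (BDVtx V D s)) :
    ∑ v ∈ X, w11 G D s BDVtx.x v
      = ((X.filter (fun v => ∃ j, v = BDVtx.c j)).card : ℚ)
        + ((X.filter (fun v => ∃ a i, v = BDVtx.u a i)).card : ℚ) := by
  simp only [w_x]
  rw [Finset.sum_add_distrib, Finset.sum_boole, Finset.sum_boole]

lemma sum_X_u (a i) (X : Finset (BDVtx V D s)) :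
    ∑ v ∈ X, w11 G D s (BDVtx.u a i) v
      = (if BDVtx.x ∈ X then (1:ℚ) else 0) + (if BDVtx.orig a ∈ X then 1 else 0)
        + (if BDVtx.u' a i ∈ X then 1 else 0) := by
  simp only [w_u]
  rw [Finset.sum_add_distrib, Finset.sum_add_distrib,
    Finset.sum_ite_eq', Finset.sum_ite_eq', Finset.sum_ite_eq']


lemma sum_X_orig (a) (X : Finset (BDVtx V D s)) :
    ∑ v ∈ X, w11 G D s (BDVtx.orig a) v
      = ((X.filter (fun v => ∃ i, v = BDVtx.u a i)).card : ℚ)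
        - ((X.filter (fun v => ∃ b, v = BDVtx.orig b ∧ G.Adj a b)).card : ℚ) := by
  simp only [w_orig]
  rw [Finset.sum_add_distrib, Finset.sum_boole]
  rw [Finset.sum_congr rfl (fun v _ => show (if (∃ b, v = BDVtx.orig b ∧ G.Adj a b) then (-1:ℚ) else 0)
      = -(if (∃ b, v = BDVtx.orig b ∧ G.Adj a b) then (1:ℚ) else 0) by split <;> simp)]
  rw [Finset.sum_neg_distrib, Finset.sum_boole]
  ring

lemma cardU_le (a) (X : Finset (BDVtx V D s)) :
    (X.filter (fun v => ∃ i, v = BDVtx.u a i)).card ≤ D + 1 := by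
  have hsub : X.filter (fun v => ∃ i, v = BDVtx.u a i) ⊆ univ.image (BDVtx.u a) := by
    intro v hv
    obtain ⟨i, rfl⟩ := (Finset.mem_filter.1 hv).2
    exact Finset.mem_image_of_mem _ (Finset.mem_univ _)
  calc _ ≤ (univ.image (BDVtx.u a)).card := Finset.card_le_card hsub
    _ ≤ (univ : Finset (Fin (D+1))).card := Finset.card_image_le
    _ = D + 1 := by simp

end Proof

/-- the Bounded Degree Deletion gadget admits a blocking coalition iff
`G` has at least `s` vertices inducing a subgraph of maximum degree at most `D`. -/
theorem bounded_degree_deletion_gadget (V : Type*) [Fintype V]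
    (G : SimpleGraph V) (D s : ℕ) (hs : 1 ≤ s) :
    (∃ X : Finset (BDVtx V D s),
        Blocking (SimpleGraph.fromRel fun u v => w11 G D s u v ≠ 0)
          (w11 G D s) (P11 D s) X)
      ↔ ∃ S : Finset V, s ≤ S.card ∧
          ∀ a ∈ S, (S.filter (fun b => G.Adj a b)).card ≤ D := by
  constructor
  · rintro ⟨X, hne, hblock⟩
    -- no leaf u' a i is in X
    have hu' : ∀ a i, BDVtx.u' a i ∉ X := by
      intro a i hmem
      have h := hblock _ hmem
      rw [ut_eq, ut_eq] at h
      have hP : ∑ v ∈ P11 D s (BDVtx.u' a i), w11 G D s (BDVtx.u' a i) v = 1 := by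
        show ∑ v ∈ ({BDVtx.u a i, BDVtx.u' a i} : Finset _), _ = _
        rw [Finset.sum_pair (by simp)]
        simp [w11]
      have hXle : ∑ v ∈ X, w11 G D s (BDVtx.u' a i) v ≤ 1 := by
        simp only [w_u']
        rw [Finset.sum_ite_eq']
        split <;> norm_num
      rw [hP] at h; linarith
    -- no c j is in X
    have hc : ∀ j, BDVtx.c j ∉ X := by
      intro j hmem
      have h := hblock _ hmem
      rw [ut_eq, ut_eq] at h
      have hP : ∑ v ∈ P11 D s (BDVtx.c j : BDVtx V D s), w11 G D s (BDVtx.c j) v = 2 := by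
        show ∑ v ∈ insert BDVtx.x (insert BDVtx.x' (univ.image BDVtx.c)), _ = _
        rw [Finset.sum_insert (by simp), Finset.sum_insert (by simp),
          Finset.sum_image (by intro a _ b _ h; simpa using h)]
        simp [w11]
        norm_num
      have hXle : ∑ v ∈ X, w11 G D s (BDVtx.c j : BDVtx V D s) v ≤ 2 := by
        simp only [w_c]
        rw [Finset.sum_add_distrib, Finset.sum_ite_eq', Finset.sum_ite_eq']
        split <;> split <;> norm_num
      rw [hP] at h; linarith
    -- x' is not in X
    have hx' : (BDVtx.x' : BDVtx V D s) ∉ X := by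
      intro hmem
      have h := hblock _ hmem
      rw [ut_eq, ut_eq, sum_P_x', sum_X_x'] at h
      have hle : (X.filter (fun v => ∃ j, v = BDVtx.c j)).card ≤ s * (D + 1) - 1 := by
        have hsub : X.filter (fun v => ∃ j, v = BDVtx.c j) ⊆ univ.image BDVtx.c := by
          intro v hv
          obtain ⟨j, rfl⟩ := (Finset.mem_filter.1 hv).2
          exact Finset.mem_image_of_mem _ (Finset.mem_univ _)
        calc _ ≤ (univ.image (BDVtx.c : Fin (s*(D+1)-1) → BDVtx V D s)).card :=
              Finset.card_le_card hsub
          _ ≤ (univ : Finset (Fin (s*(D+1)-1))).card := Finset.card_image_le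
          _ = s * (D + 1) - 1 := by simp
      have : ((X.filter (fun v => ∃ j, v = BDVtx.c j)).card : ℚ) ≤ ((s * (D+1) - 1 : ℕ) : ℚ) :=
        Nat.cast_le.2 hle
      linarith
    -- every u a i in X forces orig a and x into X
    have hux : ∀ a i, BDVtx.u a i ∈ X → BDVtx.orig a ∈ X ∧ BDVtx.x ∈ X := by
      intro a i hmem
      have h := hblock _ hmem
      rw [ut_eq, ut_eq] at h
      have hP : ∑ v ∈ P11 D s (BDVtx.u a i), w11 G D s (BDVtx.u a i) v = 1 := by
        show ∑ v ∈ ({BDVtx.u a i, BDVtx.u' a i} : Finset _), _ = _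
        rw [Finset.sum_pair (by simp)]
        simp [w11]
      rw [hP, sum_X_u G D s a i X, if_neg (hu' a i)] at h
      constructor
      · by_contra hn; rw [if_neg hn] at h; split at h <;> linarith
      · by_contra hn; rw [if_neg hn] at h; split at h <;> linarith
    -- utility count for origs in X
    have horig : ∀ a, BDVtx.orig a ∈ X →
        (X.filter (fun v => ∃ b, v = BDVtx.orig b ∧ G.Adj a b)).card
          < (X.filter (fun v => ∃ i, v = BDVtx.u a i)).card := by
      intro a hmem
      have h := hblock _ hmem
      rw [ut_eq, ut_eq] at h
      have hP : ∑ v ∈ P11 D s (BDVtx.orig a), w11 G D s (BDVtx.orig a) v = 0 := by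
        show ∑ v ∈ ({BDVtx.orig a} : Finset _), _ = _
        simp [w11]
      rw [hP, sum_X_orig G D s a X] at h
      have : ((X.filter (fun v => ∃ b, v = BDVtx.orig b ∧ G.Adj a b)).card : ℚ)
          < ((X.filter (fun v => ∃ i, v = BDVtx.u a i)).card : ℚ) := by linarith
      exact_mod_cast this
    -- x is in X
    have hxmem : (BDVtx.x : BDVtx V D s) ∈ X := by
      obtain ⟨v, hv⟩ := hne
      cases v with
      | orig a =>
        have h1 := horig a hv
        obtain ⟨v', hv'⟩ := Finset.card_pos.1 (lt_of_le_of_lt (Nat.zero_le _) h1)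
        obtain ⟨i, rfl⟩ := (Finset.mem_filter.1 hv').2
        exact (hux a i (Finset.mem_filter.1 hv').1).2
      | x => exact hv
      | x' => exact absurd hv hx'
      | c j => exact absurd hv (hc j)
      | u a i => exact (hux a i hv).2
      | u' a i => exact absurd hv (hu' a i)
    -- the set S
    have h := hblock _ hxmem
    rw [ut_eq, ut_eq, sum_P_x, sum_X_x] at h
    have hCempty : X.filter (fun v => ∃ j, v = BDVtx.c j) = ∅ := by
      rw [Finset.filter_eq_empty_iff]
      rintro v hv ⟨j, rfl⟩
      exact hc j hv
    rw [hCempty] at h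
    simp only [Finset.card_empty, Nat.cast_zero, zero_add] at h
    have hcard : s * (D + 1) ≤ (X.filter (fun v => ∃ a i, v = BDVtx.u a i)).card := by
      have h' : s * (D + 1) - 1 < (X.filter (fun v => ∃ a i, v = BDVtx.u a i)).card := by
        exact_mod_cast h
      have h1 : 1 ≤ s * (D + 1) := Nat.one_le_iff_ne_zero.2 (by positivity)
      omega
    set S := univ.filter (fun a : V => BDVtx.orig a ∈ X) with hS
    have hsub : X.filter (fun v => ∃ a i, v = BDVtx.u a i)
        ⊆ S.biUnion (fun a => univ.image (BDVtx.u a)) := by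
      intro v hv
      obtain ⟨hvX, a, i, rfl⟩ := Finset.mem_filter.1 hv
      refine Finset.mem_biUnion.2 ⟨a, ?_, Finset.mem_image_of_mem _ (Finset.mem_univ _)⟩
      simp only [hS, Finset.mem_filter, Finset.mem_univ, true_and]
      exact (hux a i hvX).1
    have hbi : (S.biUnion (fun a => univ.image (BDVtx.u a : Fin (D+1) → BDVtx V D s))).card
        ≤ S.card * (D + 1) :=
      calc _ ≤ ∑ a ∈ S, (univ.image (BDVtx.u a : Fin (D+1) → BDVtx V D s)).card :=
            Finset.card_biUnion_le
        _ ≤ ∑ _a ∈ S, (D + 1) := Finset.sum_le_sum (fun a _ =>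
            calc (univ.image (BDVtx.u a : Fin (D+1) → BDVtx V D s)).card
                ≤ (univ : Finset (Fin (D+1))).card := Finset.card_image_le
              _ = D + 1 := by simp)
        _ = S.card * (D + 1) := by rw [Finset.sum_const, smul_eq_mul]
    have hsS : s ≤ S.card := by
      have h2 := hcard.trans ((Finset.card_le_card hsub).trans hbi)
      exact Nat.le_of_mul_le_mul_right h2 (Nat.succ_pos D)
    refine ⟨S, hsS, ?_⟩
    intro a haS
    have haX : BDVtx.orig a ∈ X := by
      simpa only [hS, Finset.mem_filter, Finset.mem_univ, true_and] using haS
    have h1 := horig a haX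
    have h2 := cardU_le D s a X
    have hEq : X.filter (fun v => ∃ b, v = BDVtx.orig b ∧ G.Adj a b)
        = (S.filter (fun b => G.Adj a b)).image BDVtx.orig := by
      ext v
      simp only [Finset.mem_filter, Finset.mem_image, hS, Finset.mem_univ, true_and]
      constructor
      · rintro ⟨hvX, b, rfl, hab⟩; exact ⟨b, ⟨hvX, hab⟩, rfl⟩
      · rintro ⟨b, ⟨hbX, hab⟩, rfl⟩; exact ⟨hbX, b, rfl, hab⟩
    rw [hEq, Finset.card_image_of_injective _ (fun a b h => by simpa using h)] at h1
    omega
  · rintro ⟨S, hScard, hSdeg⟩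
    set X : Finset (BDVtx V D s) :=
      insert BDVtx.x ((S.image BDVtx.orig) ∪ S.biUnion (fun a => univ.image (BDVtx.u a)))
      with hXdef
    have hxm : (BDVtx.x : BDVtx V D s) ∈ X := Finset.mem_insert_self _ _
    have horigm : ∀ a, BDVtx.orig a ∈ X ↔ a ∈ S := by intro a; simp [hXdef]
    have hum : ∀ a i, BDVtx.u a i ∈ X ↔ a ∈ S := by intro a i; simp [hXdef]
    have hu'm : ∀ a i, BDVtx.u' a i ∉ X := by intro a i; simp [hXdef]
    have hcm : ∀ j, (BDVtx.c j : BDVtx V D s) ∉ X := by intro j; simp [hXdef]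
    have hx'm : (BDVtx.x' : BDVtx V D s) ∉ X := by simp [hXdef]
    refine ⟨X, ⟨_, hxm⟩, ?_⟩
    intro v hv
    rw [ut_eq, ut_eq]
    cases v with
    | x' => exact absurd hv hx'm
    | c j => exact absurd hv (hcm j)
    | u' a i => exact absurd hv (hu'm a i)
    | u a i =>
      have haS : a ∈ S := (hum a i).1 hv
      have hP : ∑ v ∈ P11 D s (BDVtx.u a i), w11 G D s (BDVtx.u a i) v = 1 := by
        show ∑ v ∈ ({BDVtx.u a i, BDVtx.u' a i} : Finset _), _ = _
        rw [Finset.sum_pair (by simp)]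
        simp [w11]
      rw [hP, sum_X_u, if_pos hxm, if_pos ((horigm a).2 haS), if_neg (hu'm a i)]
      norm_num
    | orig a =>
      have haS : a ∈ S := (horigm a).1 hv
      have hP : ∑ v ∈ P11 D s (BDVtx.orig a), w11 G D s (BDVtx.orig a) v = 0 := by
        show ∑ v ∈ ({BDVtx.orig a} : Finset _), _ = _
        simp [w11]
      rw [hP, sum_X_orig]
      have hUeq : X.filter (fun v => ∃ i, v = BDVtx.u a i) = univ.image (BDVtx.u a) := by
        ext v
        simp only [Finset.mem_filter, Finset.mem_image, Finset.mem_univ, true_and]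
        constructor
        · rintro ⟨hvX, i, rfl⟩; exact ⟨i, rfl⟩
        · rintro ⟨i, rfl⟩; exact ⟨(hum a i).2 haS, i, rfl⟩
      have hAeq : X.filter (fun v => ∃ b, v = BDVtx.orig b ∧ G.Adj a b)
          = (S.filter (fun b => G.Adj a b)).image BDVtx.orig := by
        ext v
        simp only [Finset.mem_filter, Finset.mem_image]
        constructor
        · rintro ⟨hvX, b, rfl, hab⟩; exact ⟨b, ⟨(horigm b).1 hvX, hab⟩, rfl⟩
        · rintro ⟨b, ⟨hbS, hab⟩, rfl⟩; exact ⟨(horigm b).2 hbS, b, rfl, hab⟩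
      rw [hUeq, hAeq,
        Finset.card_image_of_injective _ (fun a b h => by simpa using h),
        Finset.card_image_of_injective _ (fun a b h => by simpa using h)]
      have hD := hSdeg a haS
      have hcast : ((S.filter (fun b => G.Adj a b)).card : ℚ) ≤ (D : ℚ) := Nat.cast_le.2 hD
      have : ((univ : Finset (Fin (D+1))).card : ℚ) = (D : ℚ) + 1 := by simp
      rw [this]
      linarith
    | x =>
      rw [sum_P_x, sum_X_x]
      have hCempty : X.filter (fun v => ∃ j, v = BDVtx.c j) = ∅ := by
        rw [Finset.filter_eq_empty_iff]
        rintro v hv ⟨j, rfl⟩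
        exact hcm j hv
      have hUeq : X.filter (fun v => ∃ a i, v = BDVtx.u a i)
          = S.biUnion (fun a => univ.image (BDVtx.u a)) := by
        ext v
        simp only [Finset.mem_filter, Finset.mem_biUnion, Finset.mem_image,
          Finset.mem_univ, true_and]
        constructor
        · rintro ⟨hvX, a, i, rfl⟩; exact ⟨a, (hum a i).1 hvX, i, rfl⟩
        · rintro ⟨a, haS, i, rfl⟩; exact ⟨(hum a i).2 haS, a, i, rfl⟩
      have hbicard : (S.biUnion (fun a => univ.image (BDVtx.u a : Fin (D+1) → BDVtx V D s))).card
          = S.card * (D + 1) := by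
        rw [Finset.card_biUnion]
        · rw [Finset.sum_congr rfl (fun a _ =>
            show (univ.image (BDVtx.u a)).card = D + 1 by
              rw [Finset.card_image_of_injective _ (fun i i' h => by simpa using h)]; simp)]
          rw [Finset.sum_const, smul_eq_mul]
        · intro a _ b _ hab
          rw [Function.onFun, Finset.disjoint_left]
          rintro v hva hvb
          obtain ⟨i, -, rfl⟩ := Finset.mem_image.1 hva
          obtain ⟨i', -, hii⟩ := Finset.mem_image.1 hvb
          obtain ⟨h1, h2⟩ : b = a ∧ i' = i := by simpa using hii
          exact hab h1.symm
      rw [hCempty, hUeq, hbicard]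
      have hlt : s * (D + 1) - 1 < S.card * (D + 1) :=
        lt_of_lt_of_le (Nat.sub_lt (Nat.mul_pos hs (Nat.succ_pos D)) one_pos)
          (Nat.mul_le_mul_right _ hScard)
      have : ((s * (D + 1) - 1 : ℕ) : ℚ) < ((S.card * (D + 1) : ℕ) : ℚ) := Nat.cast_lt.2 hlt
      simp only [Finset.card_empty, Nat.cast_zero, zero_add]
      exact_mod_cast this
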